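/- arXiv:1612.02312 — 4 statements merged into one kernel-verified Lean document; each statement's English description precedes it below -/
import Mathlib

section
/- Suppose (φ,z) ∈ Λ^a(Y,X), i.e. z_t − φ_t X_t − z_{t+1} ∈ Q_t for t = 0,…,T−1 and z_t − φ*_t Y_t ∈ Q_t for t = 0,…,T (with z predictable, z_{T+1} = 0). Then for every t = 0,…,T: on the event {φ*_t > 0}, z_t ∈ φ*_t Z^a_t, and on {φ*_t = 0}, z_t ∈ Q_t, where Z^a_t is defined by the backward recursion Z^a_T := Y_T + Q_T, W^a_t := Z^a_{t+1} ∩ L_t, V^a_t := W^a_t + Q_t, Z^a_t := conv{V^a_t, X_t + Q_t} ∩ (Y_t + Q_t). -/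
open Pointwise

/-- Auxiliary backward recursion for the seller's construction: `sellerZ T L Q Y X n`
is the set 𝒵ᵃ_{T−n}, i.e. 𝒵ᵃ_T = Y_T + Q_T and, for t = T−(n+1),
𝒵ᵃ_t = conv{(𝒵ᵃ_{t+1} ∩ L_t) + Q_t, X_t + Q_t} ∩ (Y_t + Q_t). -/
def sellerZ {V : Type*} [AddCommGroup V] [Module ℝ V]
    (T : ℕ) (L Q : ℕ → Set V) (Y X : ℕ → V) : ℕ → Set V
  | 0 => {Y T} + Q T
  | n + 1 =>
      (convexHull ℝ
          (((sellerZ T L Q Y X n ∩ L (T - (n + 1))) + Q (T - (n + 1)))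
            ∪ ({X (T - (n + 1))} + Q (T - (n + 1)))))
        ∩ ({Y (T - (n + 1))} + Q (T - (n + 1)))

/-- If (φ,z) ∈ Λᵃ(Y,X), i.e. z_t − φ_t X_t − z_{t+1} ∈ Q_t for t < T and
z_t − φ*_t Y_t ∈ Q_t for t ≤ T, with z predictable and z_{T+1} = 0, then for
every t ≤ T: z_t ∈ φ*_t 𝒵ᵃ_t when φ*_t > 0, and z_t ∈ Q_t when φ*_t = 0. -/
theorem stmt11 {V : Type*} [AddCommGroup V] [Module ℝ V] (T : ℕ)
    (L : ℕ → Submodule ℝ V) (Q : ℕ → Set V)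
    (hQconv : ∀ t, Convex ℝ (Q t))
    (hQ0 : ∀ t, (0 : V) ∈ Q t)
    (hQadd : ∀ t, Q t + Q t = Q t)
    (hQsmul : ∀ t, ∀ c : ℝ, 0 < c → c • Q t = Q t)
    (hQL : ∀ t, Q (t + 1) ∩ (L t : Set V) ⊆ Q t)
    (Y X : ℕ → V) (φ : ℕ → ℝ)
    (hφ : ∀ t ≤ T, 0 ≤ φ t)
    (hφsum : ∑ t ∈ Finset.range (T + 1), φ t = 1)
    (z : ℕ → V) (hzT : z (T + 1) = 0)
    (hpred : ∀ t ≤ T, z (t + 1) ∈ L t)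
    (h1 : ∀ t < T, z t - φ t • X t - z (t + 1) ∈ Q t)
    (h2 : ∀ t ≤ T, z t - (∑ s ∈ Finset.Icc t T, φ s) • Y t ∈ Q t) :
    ∀ t ≤ T,
      (0 < (∑ s ∈ Finset.Icc t T, φ s) →
          z t ∈ (∑ s ∈ Finset.Icc t T, φ s) •
            sellerZ T (fun u => (L u : Set V)) Q Y X (T - t)) ∧
        ((∑ s ∈ Finset.Icc t T, φ s) = 0 → z t ∈ Q t) := by
  have hSnn : ∀ t, 0 ≤ ∑ s ∈ Finset.Icc t T, φ s := fun t =>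
    Finset.sum_nonneg fun s hs => hφ s (Finset.mem_Icc.mp hs).2
  have hsplit : ∀ t, t ≤ T →
      ∑ s ∈ Finset.Icc t T, φ s = φ t + ∑ s ∈ Finset.Icc (t + 1) T, φ s := by
    intro t ht
    rw [← Finset.Ioc_insert_left ht, Finset.sum_insert (by simp), Finset.Icc_add_one_left_eq_Ioc]
  have key : ∀ n : ℕ, ∀ t : ℕ, t + n = T →
      (0 < (∑ s ∈ Finset.Icc t T, φ s) →
          z t ∈ (∑ s ∈ Finset.Icc t T, φ s) •
            sellerZ T (fun u => (L u : Set V)) Q Y X n) ∧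
        ((∑ s ∈ Finset.Icc t T, φ s) = 0 → z t ∈ Q t) := by
    intro n
    induction n with
    | zero =>
      intro t ht
      have ht' : t = T := by omega
      constructor
      · intro hpos
        have hY := h2 t (le_of_eq ht')
        rw [← hQsmul t _ hpos, Set.mem_smul_set] at hY
        obtain ⟨q, hq, hq'⟩ := hY
        have hz : z t = (∑ s ∈ Finset.Icc t T, φ s) • (Y t + q) := by
          rw [smul_add, hq']; abel
        have hsz : sellerZ T (fun u => (L u : Set V)) Q Y X 0
            = {Y t} + Q t := by rw [ht']; rfl
        rw [hz, hsz]
        exact Set.smul_mem_smul_set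
          (Set.add_mem_add (Set.mem_singleton _) hq)
      · intro h0
        have hY := h2 t (le_of_eq ht')
        rw [h0, zero_smul, sub_zero] at hY
        exact hY
    | succ n ih =>
      intro t ht
      have htT : t < T := by omega
      have htn : T - (n + 1) = t := by omega
      have ih' := ih (t + 1) (by omega)
      have hspl := hsplit t htT.le
      set St := ∑ s ∈ Finset.Icc t T, φ s with hSt
      set St1 := ∑ s ∈ Finset.Icc (t + 1) T, φ s with hSt1
      have hSt1nn : 0 ≤ St1 := hSnn (t + 1)
      have hφt : 0 ≤ φ t := hφ t htT.le
      constructor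
      · intro hpos
        have hStne : St ≠ 0 := ne_of_gt hpos
        -- the convex hull set
        set A : Set V := (sellerZ T (fun u => (L u : Set V)) Q Y X n
            ∩ (L t : Set V)) + Q t with hA
        set B : Set V := ({X t} : Set V) + Q t with hB
        have hq := h1 t htT
        -- produce the point p with z t = St • p and p in the hull
        obtain ⟨p, hzp, hp1⟩ : ∃ p, z t = St • p ∧ p ∈ convexHull ℝ (A ∪ B) := by
          rcases eq_or_lt_of_le hSt1nn with h0 | hpos1
          · -- St1 = 0
            have h0' : St1 = 0 := h0.symm
            have hz1Q : z (t + 1) ∈ Q (t + 1) := ih'.2 h0'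
            have hz1L : z (t + 1) ∈ L t := hpred t htT.le
            have hz1Qt : z (t + 1) ∈ Q t := hQL t ⟨hz1Q, hz1L⟩
            have hqq : z t - φ t • X t - z (t + 1) + z (t + 1) ∈ Q t := by
              rw [← hQadd t]; exact Set.add_mem_add hq hz1Qt
            have hφSt : φ t = St := by rw [hspl, h0', add_zero]
            refine ⟨X t + St⁻¹ • (z t - φ t • X t - z (t + 1) + z (t + 1)),
              ?_, subset_convexHull ℝ _ (Or.inr ?_)⟩
            · rw [smul_add, smul_smul, mul_inv_cancel₀ hStne, one_smul, ← hφSt]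
              abel
            · refine Set.add_mem_add (Set.mem_singleton _) ?_
              rw [← hQsmul t St⁻¹ (by positivity)]
              exact Set.smul_mem_smul_set hqq
          · -- St1 > 0
            have hSt1ne : St1 ≠ 0 := ne_of_gt hpos1
            have hmem := ih'.1 hpos1
            rw [Set.mem_smul_set] at hmem
            obtain ⟨w, hw, hzw⟩ := hmem
            have hwL : w ∈ L t := by
              have hww : w = St1⁻¹ • z (t + 1) := by
                rw [← hzw, smul_smul, inv_mul_cancel₀ hSt1ne, one_smul]
              rw [hww]
              exact Submodule.smul_mem _ _ (hpred t htT.le)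
            have hqa : St1⁻¹ • (z t - φ t • X t - z (t + 1)) ∈ Q t := by
              rw [← hQsmul t St1⁻¹ (by positivity)]
              exact Set.smul_mem_smul_set hq
            have ha : w + St1⁻¹ • (z t - φ t • X t - z (t + 1)) ∈ A :=
              Set.add_mem_add ⟨hw, hwL⟩ hqa
            have hb : X t ∈ B :=
              ⟨X t, Set.mem_singleton _, 0, hQ0 t, add_zero _⟩
            have hle : St1 ≤ St := by linarith
            have hlam0 : 0 ≤ St1 / St := div_nonneg hSt1nn hpos.le
            have hlam1 : St1 / St ≤ 1 := div_le_one_of_le₀ hle hpos.le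
            refine ⟨(St1 / St) • (w + St1⁻¹ • (z t - φ t • X t - z (t + 1)))
                + (1 - St1 / St) • X t, ?_, ?_⟩
            · have e1 : St * (St1 / St) = St1 := by field_simp
              have e2 : St * (1 - St1 / St) = φ t := by
                field_simp
                linarith
              rw [smul_add, smul_smul, smul_smul, e1, e2, smul_add, smul_smul,
                mul_inv_cancel₀ hSt1ne, one_smul, hzw]
              abel
            · exact (convex_convexHull ℝ (A ∪ B))
                (subset_convexHull ℝ _ (Or.inl ha))
                (subset_convexHull ℝ _ (Or.inr hb))
                hlam0 (by linarith) (by ring)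
        -- p is also in {Y t} + Q t
        have hp2 : p ∈ ({Y t} : Set V) + Q t := by
          have hY := h2 t htT.le
          rw [← hSt, ← hQsmul t St hpos, Set.mem_smul_set] at hY
          obtain ⟨q, hqQ, hq'⟩ := hY
          have h3 : St • q = St • (p - Y t) := by
            rw [hq', hzp, smul_sub]
          have hqp : q = p - Y t := by
            rw [← one_smul ℝ q, ← inv_mul_cancel₀ hStne, mul_smul, h3, smul_smul,
              inv_mul_cancel₀ hStne, one_smul]
          have hmem2 : Y t + (p - Y t) ∈ ({Y t} : Set V) + Q t :=
            Set.add_mem_add (Set.mem_singleton _) (hqp ▸ hqQ)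
          have hYp : Y t + (p - Y t) = p := by abel
          rwa [hYp] at hmem2
        rw [hzp]
        refine Set.smul_mem_smul_set ?_
        have hunfold : sellerZ T (fun u => (L u : Set V)) Q Y X (n + 1)
            = (convexHull ℝ (A ∪ B)) ∩ (({Y t} : Set V) + Q t) := by
          show (convexHull ℝ
              (((sellerZ T (fun u => (L u : Set V)) Q Y X n
                  ∩ (L (T - (n + 1)) : Set V)) + Q (T - (n + 1)))
                ∪ ({X (T - (n + 1))} + Q (T - (n + 1)))))
              ∩ ({Y (T - (n + 1))} + Q (T - (n + 1))) = _
          rw [htn]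
        rw [hunfold]
        exact ⟨hp1, hp2⟩
      · intro h0
        have hφ0 : φ t = 0 := by linarith
        have hS10 : St1 = 0 := by linarith
        have hz1Q : z (t + 1) ∈ Q (t + 1) := ih'.2 hS10
        have hz1Qt : z (t + 1) ∈ Q t := hQL t ⟨hz1Q, hpred t htT.le⟩
        have hq := h1 t htT
        rw [hφ0, zero_smul, sub_zero] at hq
        have hzz : z t - z (t + 1) + z (t + 1) ∈ Q t := by
          rw [← hQadd t]; exact Set.add_mem_add hq hz1Qt
        simpa using hzz
  intro t ht
  exact key (T - t) t (by omega)
end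

section
/- If a ∈ Z^a_0 (from the seller's backward construction), then there exist a mixed stopping time φ and a predictable process z with z_0 = a, z_{T+1} = 0 such that z_t − φ_t X_t − z_{t+1} ∈ Q_t for all t = 0,…,T−1 and z_t − φ*_t Y_t ∈ Q_t for all t = 0,…,T. Combined with the reverse inclusion, Z^a_0 = {z_0 : (φ,z) ∈ Λ^a(Y,X)}. -/
open Pointwise

section Aux

variable {V : Type*} [AddCommGroup V] [Module ℝ V]

/-- The set of attainable values at time `t` for the seller's problem. -/
def sellerA (T : ℕ) (L : ℕ → Submodule ℝ V) (Q : ℕ → Set V) (Y X : ℕ → V) (t : ℕ) : Set V :=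
  {v : V | ∃ (φ : ℕ → ℝ) (z : ℕ → V),
    (∀ s ≤ T, 0 ≤ φ s) ∧ (∀ s < t, φ s = 0) ∧
    (∑ s ∈ Finset.range (T + 1), φ s = 1) ∧
    z (T + 1) = 0 ∧
    (∀ s, t ≤ s → s ≤ T → z (s + 1) ∈ L s) ∧
    (∀ s, t ≤ s → s < T → z s - φ s • X s - z (s + 1) ∈ Q s) ∧
    (∀ s, t ≤ s → s ≤ T → z s - (∑ u ∈ Finset.Icc s T, φ u) • Y s ∈ Q s) ∧
    z t = v}

lemma sum_Icc_eq_sum_range {f : ℕ → ℝ} {t T : ℕ} (h0 : ∀ s < t, f s = 0) :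
    ∑ s ∈ Finset.Icc t T, f s = ∑ s ∈ Finset.range (T + 1), f s := by
  apply Finset.sum_subset
  · intro x hx; simp only [Finset.mem_Icc] at hx; simp only [Finset.mem_range]; omega
  · intro x hx hnx; simp only [Finset.mem_range] at hx; simp only [Finset.mem_Icc] at hnx
    exact h0 x (by omega)

lemma sum_Icc_split {f : ℕ → ℝ} {t T : ℕ} (ht : t ≤ T) :
    ∑ s ∈ Finset.Icc (t + 1) T, f s + f t = ∑ s ∈ Finset.Icc t T, f s := by
  rw [Finset.Icc_add_one_left_eq_Ioc, ← Finset.Icc_erase_left]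
  exact Finset.sum_erase_add _ _ (Finset.mem_Icc.2 ⟨le_rfl, ht⟩)

variable {T : ℕ} {L : ℕ → Submodule ℝ V} {Q : ℕ → Set V}
  (hQconv : ∀ t, Convex ℝ (Q t))
  (hQ0 : ∀ t, (0 : V) ∈ Q t)
  (hQadd : ∀ t, Q t + Q t = Q t)
  (hQsmul : ∀ t, ∀ c : ℝ, 0 < c → c • Q t = Q t)
  (hQL : ∀ t, Q (t + 1) ∩ (L t : Set V) ⊆ Q t)
  {Y X : ℕ → V}

include hQsmul hQ0 in
lemma Q_smul_mem {s : ℕ} {c : ℝ} (hc : 0 ≤ c) {x : V} (hx : x ∈ Q s) : c • x ∈ Q s := by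
  rcases eq_or_lt_of_le hc with h | h
  · rw [← h, zero_smul]; exact hQ0 s
  · rw [← hQsmul s c h]; exact Set.smul_mem_smul_set hx

include hQadd in
lemma Q_add_mem {s : ℕ} {x y : V} (hx : x ∈ Q s) (hy : y ∈ Q s) : x + y ∈ Q s := by
  rw [← hQadd s]; exact Set.add_mem_add hx hy

include hQconv in
lemma sellerA_convex (t : ℕ) : Convex ℝ (sellerA T L Q Y X t) := by
  rintro x ⟨φ, z, h1, h2, h3, h4, h5, h6, h7, h8⟩ y ⟨φ', z', g1, g2, g3, g4, g5, g6, g7, g8⟩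
    a b ha hb hab
  refine ⟨fun s => a * φ s + b * φ' s, fun s => a • z s + b • z' s, ?_, ?_, ?_, ?_, ?_, ?_, ?_, ?_⟩
  all_goals dsimp only
  · intro s hs; exact add_nonneg (mul_nonneg ha (h1 s hs)) (mul_nonneg hb (g1 s hs))
  · intro s hs; rw [h2 s hs, g2 s hs]; ring
  · rw [Finset.sum_add_distrib, ← Finset.mul_sum, ← Finset.mul_sum, h3, g3]
    rw [mul_one, mul_one]; exact hab
  · rw [h4, g4, smul_zero, smul_zero, add_zero]
  · intro s hts hsT; exact (L s).add_mem ((L s).smul_mem a (h5 s hts hsT))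
      ((L s).smul_mem b (g5 s hts hsT))
  · intro s hts hsT
    have key := hQconv s (h6 s hts hsT) (g6 s hts hsT) ha hb hab
    have : a • z s + b • z' s - (a * φ s + b * φ' s) • X s - (a • z (s + 1) + b • z' (s + 1))
        = a • (z s - φ s • X s - z (s + 1)) + b • (z' s - φ' s • X s - z' (s + 1)) := by
      module
    rw [this]; exact key
  · intro s hts hsT
    have key := hQconv s (h7 s hts hsT) (g7 s hts hsT) ha hb hab
    have hsum : ∑ u ∈ Finset.Icc s T, (a * φ u + b * φ' u)
        = a * ∑ u ∈ Finset.Icc s T, φ u + b * ∑ u ∈ Finset.Icc s T, φ' u := by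
      rw [Finset.sum_add_distrib, Finset.mul_sum, Finset.mul_sum]
    rw [hsum]
    have : a • z s + b • z' s - (a * ∑ u ∈ Finset.Icc s T, φ u
          + b * ∑ u ∈ Finset.Icc s T, φ' u) • Y s
        = a • (z s - (∑ u ∈ Finset.Icc s T, φ u) • Y s)
          + b • (z' s - (∑ u ∈ Finset.Icc s T, φ' u) • Y s) := by
      module
    rw [this]; exact key
  · rw [h8, g8]

include hQconv hQ0 hQadd hQsmul hQL in
lemma sellerZ_eq_sellerA : ∀ n, n ≤ T →
    sellerZ T (fun u => (L u : Set V)) Q Y X n = sellerA T L Q Y X (T - n) := by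
  intro n
  induction n with
  | zero =>
    intro _
    rw [Nat.sub_zero]
    ext v
    constructor
    · rintro hv
      rw [sellerZ, Set.mem_add] at hv
      obtain ⟨y, hy, q, hq, rfl⟩ := hv
      rw [Set.mem_singleton_iff] at hy; subst hy
      refine ⟨fun s => if s = T then 1 else 0,
        fun s => if s = T then Y T + q else 0, ?_, ?_, ?_, ?_, ?_, ?_, ?_, ?_⟩
      all_goals dsimp only
      · intro s _; split <;> norm_num
      · intro s hs; rw [if_neg (by omega)]
      · rw [Finset.sum_ite_eq' (Finset.range (T + 1)) T (fun _ => (1 : ℝ))]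
        rw [if_pos (Finset.mem_range.2 (by omega))]
      · rw [if_neg (by omega)]
      · intro s hts hsT
        rw [if_neg (by omega)]; exact (L s).zero_mem
      · intro s hts hsT; omega
      · intro s hts hsT
        have hsT' : s = T := le_antisymm hsT hts
        rw [hsT', Finset.Icc_self, Finset.sum_singleton, if_pos rfl, if_pos rfl, one_smul]
        simpa using hq
      · rw [if_pos rfl]
    · rintro ⟨φ, z, h1, h2, h3, h4, h5, h6, h7, h8⟩
      have hφT : φ T = 1 := by
        rw [Finset.sum_range_succ] at h3
        have : ∑ s ∈ Finset.range T, φ s = 0 :=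
          Finset.sum_eq_zero fun s hs => h2 s (Finset.mem_range.1 hs)
        rw [this, zero_add] at h3; exact h3
      have key := h7 T le_rfl le_rfl
      rw [Finset.Icc_self, Finset.sum_singleton, hφT, one_smul, h8] at key
      rw [sellerZ, Set.mem_add]
      exact ⟨Y T, rfl, v - Y T, key, by abel⟩
  | succ n ih =>
    intro hn
    have ht1 : T - (n + 1) + 1 = T - n := by omega
    have htT : T - (n + 1) < T := by omega
    set t := T - (n + 1) with htdef
    have ihe := ih (by omega)
    rw [show T - n = t + 1 from ht1.symm] at ihe
    ext v
    rw [sellerZ, ihe]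
    constructor
    · rintro ⟨hv, hvY⟩
      rw [Set.mem_add] at hvY
      obtain ⟨y0, hy0, q0, hq0, hvy0⟩ := hvY
      rw [Set.mem_singleton_iff] at hy0; subst hy0
      have hq0' : v - Y t ∈ Q t := by
        have : v - Y t = q0 := by rw [← hvy0]; abel
        rw [this]; exact hq0
      -- decompose membership in the convex hull
      by_cases hne : (sellerA T L Q Y X (t + 1) ∩ (L t : Set V)).Nonempty
      · -- S₁ nonempty
        have hS1 : (sellerA T L Q Y X (t + 1) ∩ (L t : Set V) + Q t).Nonempty :=
          ⟨hne.choose + 0, Set.add_mem_add hne.choose_spec (hQ0 t)⟩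
        have hS2 : (({X t} : Set V) + Q t).Nonempty :=
          ⟨X t + 0, Set.add_mem_add rfl (hQ0 t)⟩
        rw [convexHull_union hS1 hS2] at hv
        have hc1 : Convex ℝ (sellerA T L Q Y X (t + 1) ∩ (L t : Set V) + Q t) :=
          ((sellerA_convex hQconv (t + 1)).inter (L t).convex).add (hQconv t)
        have hc2 : Convex ℝ (({X t} : Set V) + Q t) :=
          (convex_singleton (X t)).add (hQconv t)
        rw [hc1.convexHull_eq, hc2.convexHull_eq, mem_convexJoin] at hv
        obtain ⟨a, ha, b, hb, hseg⟩ := hv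
        obtain ⟨α, β, hα, hβ, hαβ, habv⟩ := hseg
        rw [Set.mem_add] at ha hb
        obtain ⟨w, hw, q1, hq1, haw⟩ := ha
        obtain ⟨xb, hxb, q2, hq2, hbx⟩ := hb
        rw [Set.mem_singleton_iff] at hxb; subst hxb
        obtain ⟨hwA, hwL⟩ := hw
        obtain ⟨ψ, yy, p1, p2, p3, p4, p5, p6, p7, p8⟩ := hwA
        have hψt : ψ t = 0 := p2 t (Nat.lt_succ_self t)
        refine ⟨fun s => if s = t then β else α * ψ s,
          fun s => if s ≤ t then v else α • yy s, ?_, ?_, ?_, ?_, ?_, ?_, ?_, ?_⟩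
        all_goals dsimp only
        · intro s hs
          split
          · exact hβ
          · exact mul_nonneg hα (p1 s hs)
        · intro s hs; rw [if_neg (by omega)]
          rw [p2 s (by omega), mul_zero]
        · have heq : ∀ s, (if s = t then β else α * ψ s)
              = α * ψ s + (if s = t then β else 0) := by
            intro s
            by_cases h : s = t
            · subst h; rw [if_pos rfl, if_pos rfl, hψt, mul_zero, zero_add]
            · rw [if_neg h, if_neg h, add_zero]
          simp only [heq]
          rw [Finset.sum_add_distrib, ← Finset.mul_sum, p3, mul_one,
            Finset.sum_ite_eq' (Finset.range (T + 1)) t (fun _ => β),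
            if_pos (Finset.mem_range.2 (by omega))]
          exact hαβ
        · rw [if_neg (by omega), p4, smul_zero]
        · intro s hts hsT
          rw [if_neg (by omega)]
          rcases eq_or_lt_of_le hts with h | h
          · rw [← h, p8]; exact (L t).smul_mem α hwL
          · exact (L s).smul_mem α (p5 s (by omega) hsT)
        · intro s hts hsT
          rcases eq_or_lt_of_le hts with h | h
          · rw [← h]
            rw [if_pos le_rfl, if_pos rfl, if_neg (by omega), p8]
            have hv' : v = α • (w + q1) + β • (X t + q2) := by
              rw [← habv, haw, hbx]
            have : v - β • X t - α • w = α • q1 + β • q2 := by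
              rw [hv']; module
            rw [this]
            exact hQconv t hq1 hq2 hα hβ hαβ
          · rw [if_neg (by omega), if_neg (by omega), if_neg (by omega)]
            have : α • yy s - (α * ψ s) • X s - α • yy (s + 1)
                = α • (yy s - ψ s • X s - yy (s + 1)) := by module
            rw [this]
            exact Q_smul_mem hQ0 hQsmul hα (p6 s (by omega) hsT)
        · intro s hts hsT
          rcases eq_or_lt_of_le hts with h | h
          · rw [← h]
            rw [if_pos le_rfl]
            have hsum : ∑ u ∈ Finset.Icc t T, (if u = t then β else α * ψ u) = 1 := by
              have heq : ∀ u, (if u = t then β else α * ψ u)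
                  = α * ψ u + (if u = t then β else 0) := by
                intro u
                by_cases h : u = t
                · subst h; rw [if_pos rfl, if_pos rfl, hψt, mul_zero, zero_add]
                · rw [if_neg h, if_neg h, add_zero]
              simp only [heq]
              rw [Finset.sum_add_distrib, ← Finset.mul_sum,
                Finset.sum_ite_eq' (Finset.Icc t T) t (fun _ => β),
                if_pos (Finset.mem_Icc.2 ⟨le_rfl, by omega⟩)]
              have : ∑ u ∈ Finset.Icc t T, ψ u = 1 := by
                rw [sum_Icc_eq_sum_range (fun u hu => p2 u (by omega))]
                exact p3
              rw [this, mul_one]; exact hαβ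
            rw [hsum, one_smul]
            exact hq0'
          · rw [if_neg (by omega)]
            have hsum : ∑ u ∈ Finset.Icc s T, (if u = t then β else α * ψ u)
                = α * ∑ u ∈ Finset.Icc s T, ψ u := by
              rw [Finset.mul_sum]
              apply Finset.sum_congr rfl
              intro u hu
              rw [if_neg (by simp only [Finset.mem_Icc] at hu; omega)]
            rw [hsum]
            have : α • yy s - (α * ∑ u ∈ Finset.Icc s T, ψ u) • Y s
                = α • (yy s - (∑ u ∈ Finset.Icc s T, ψ u) • Y s) := by module
            rw [this]
            exact Q_smul_mem hQ0 hQsmul hα (p7 s (by omega) hsT)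
        · rw [if_pos le_rfl]
      · -- S₁ empty
        have hS1e : sellerA T L Q Y X (t + 1) ∩ (L t : Set V) + Q t = ∅ := by
          rw [Set.not_nonempty_iff_eq_empty] at hne
          rw [hne, Set.empty_add]
        rw [hS1e, Set.empty_union,
          ((convex_singleton (X t)).add (hQconv t)).convexHull_eq, Set.mem_add] at hv
        obtain ⟨xb, hxb, q2, hq2, hbx⟩ := hv
        rw [Set.mem_singleton_iff] at hxb; subst hxb
        have hq2' : v - X t ∈ Q t := by
          have : v - X t = q2 := by rw [← hbx]; abel
          rw [this]; exact hq2
        refine ⟨fun s => if s = t then 1 else 0,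
          fun s => if s ≤ t then v else 0, ?_, ?_, ?_, ?_, ?_, ?_, ?_, ?_⟩
        all_goals dsimp only
        · intro s _; split <;> norm_num
        · intro s hs; rw [if_neg (by omega)]
        · rw [Finset.sum_ite_eq' (Finset.range (T + 1)) t (fun _ => (1 : ℝ)),
            if_pos (Finset.mem_range.2 (by omega))]
        · rw [if_neg (by omega)]
        · intro s hts hsT; rw [if_neg (by omega)]; exact (L s).zero_mem
        · intro s hts hsT
          rcases eq_or_lt_of_le hts with h | h
          · rw [← h]
            rw [if_pos le_rfl, if_pos rfl, if_neg (by omega), one_smul, sub_zero]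
            exact hq2'
          · rw [if_neg (by omega), if_neg (by omega), if_neg (by omega),
              zero_smul, sub_zero, sub_zero]
            exact hQ0 s
        · intro s hts hsT
          rcases eq_or_lt_of_le hts with h | h
          · rw [← h]
            rw [if_pos le_rfl,
              Finset.sum_ite_eq' (Finset.Icc t T) t (fun _ => (1 : ℝ)),
              if_pos (Finset.mem_Icc.2 ⟨le_rfl, by omega⟩), one_smul]
            exact hq0'
          · rw [if_neg (by omega)]
            have : ∑ u ∈ Finset.Icc s T, (if u = t then (1:ℝ) else 0) = 0 := by
              apply Finset.sum_eq_zero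
              intro u hu
              rw [if_neg (by simp only [Finset.mem_Icc] at hu; omega)]
            rw [this, zero_smul, sub_zero]
            exact hQ0 s
        · rw [if_pos le_rfl]
    · rintro ⟨φ, z, h1, h2, h3, h4, h5, h6, h7, h8⟩
      have hsumIcc : ∑ u ∈ Finset.Icc t T, φ u = 1 := by
        rw [sum_Icc_eq_sum_range h2]; exact h3
      constructor
      · -- membership in the convex hull
        set β := φ t with hβdef
        set α := ∑ u ∈ Finset.Icc (t + 1) T, φ u with hαdef
        have hαβ : α + β = 1 := by rw [hαdef, hβdef, sum_Icc_split (by omega)]; exact hsumIcc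
        have hβ : 0 ≤ β := h1 t (by omega)
        have hα : 0 ≤ α := Finset.sum_nonneg fun u hu =>
          h1 u (by simp only [Finset.mem_Icc] at hu; omega)
        have hq : z t - β • X t - z (t + 1) ∈ Q t := h6 t le_rfl htT
        rcases eq_or_lt_of_le hα with hα0 | hαpos
        · -- α = 0 : pure exercise
          have hφz : ∀ u ∈ Finset.Icc (t + 1) T, φ u = 0 := by
            intro u hu
            have := (Finset.sum_eq_zero_iff_of_nonneg fun u hu =>
              h1 u (by simp only [Finset.mem_Icc] at hu; omega)).1 hα0.symm
            exact this u hu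
          have hβ1 : β = 1 := by rw [← hα0, zero_add] at hαβ; exact hαβ
          have hz1Q : z (t + 1) ∈ Q (t + 1) := by
            have h' := h7 (t + 1) (by omega) (by omega)
            have hs0 : ∑ u ∈ Finset.Icc (t + 1) T, φ u = 0 := by
              rw [← hαdef]; exact hα0.symm
            rwa [hs0, zero_smul, sub_zero] at h'
          have hz1L : z (t + 1) ∈ L t := h5 t le_rfl (by omega)
          have hz1Qt : z (t + 1) ∈ Q t := hQL t ⟨hz1Q, hz1L⟩
          have hvX : v - X t ∈ Q t := by
            have h' : (z t - β • X t - z (t + 1)) + z (t + 1) ∈ Q t :=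
              Q_add_mem hQadd hq hz1Qt
            have : v - X t = (z t - β • X t - z (t + 1)) + z (t + 1) := by
              rw [h8, hβ1, one_smul]; abel
            rwa [this]
          apply subset_convexHull ℝ _
          apply Set.mem_union_right
          rw [Set.mem_add]
          exact ⟨X t, rfl, v - X t, hvX, by abel⟩
        · -- α > 0
          have hαne : α ≠ 0 := ne_of_gt hαpos
          set w : V := α⁻¹ • z (t + 1) with hwdef
          have hwA : w ∈ sellerA T L Q Y X (t + 1) := by
            refine ⟨fun s => if s ≤ t then 0 else α⁻¹ * φ s, fun s => α⁻¹ • z s,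
              ?_, ?_, ?_, ?_, ?_, ?_, ?_, ?_⟩
            all_goals dsimp only
            · intro s hs
              split
              · exact le_rfl
              · exact mul_nonneg (inv_nonneg.2 hα) (h1 s hs)
            · intro s hs; rw [if_pos (by omega)]
            · have : ∑ s ∈ Finset.Icc (t + 1) T, (if s ≤ t then 0 else α⁻¹ * φ s)
                  = ∑ s ∈ Finset.range (T + 1), (if s ≤ t then 0 else α⁻¹ * φ s) := by
                apply sum_Icc_eq_sum_range
                intro s hs; rw [if_pos (by omega)]
              rw [← this]
              have : ∑ s ∈ Finset.Icc (t + 1) T, (if s ≤ t then 0 else α⁻¹ * φ s)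
                  = α⁻¹ * ∑ s ∈ Finset.Icc (t + 1) T, φ s := by
                rw [Finset.mul_sum]
                apply Finset.sum_congr rfl
                intro u hu
                rw [if_neg (by simp only [Finset.mem_Icc] at hu; omega)]
              rw [this, ← hαdef, inv_mul_cancel₀ hαne]
            · rw [h4, smul_zero]
            · intro s hts hsT; exact (L s).smul_mem _ (h5 s (by omega) hsT)
            · intro s hts hsT
              rw [if_neg (by omega)]
              have : α⁻¹ • z s - (α⁻¹ * φ s) • X s - α⁻¹ • z (s + 1)
                  = α⁻¹ • (z s - φ s • X s - z (s + 1)) := by module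
              rw [this]
              exact Q_smul_mem hQ0 hQsmul (inv_nonneg.2 hα) (h6 s (by omega) hsT)
            · intro s hts hsT
              have hsum : ∑ u ∈ Finset.Icc s T, (if u ≤ t then 0 else α⁻¹ * φ u)
                  = α⁻¹ * ∑ u ∈ Finset.Icc s T, φ u := by
                rw [Finset.mul_sum]
                apply Finset.sum_congr rfl
                intro u hu
                rw [if_neg (by simp only [Finset.mem_Icc] at hu; omega)]
              rw [hsum]
              have : α⁻¹ • z s - (α⁻¹ * ∑ u ∈ Finset.Icc s T, φ u) • Y s
                  = α⁻¹ • (z s - (∑ u ∈ Finset.Icc s T, φ u) • Y s) := by module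
              rw [this]
              exact Q_smul_mem hQ0 hQsmul (inv_nonneg.2 hα) (h7 s (by omega) hsT)
          have hwL : w ∈ L t := (L t).smul_mem _ (h5 t le_rfl (by omega))
          set q : V := z t - β • X t - z (t + 1) with hqdef
          have haS1 : w + α⁻¹ • q ∈ sellerA T L Q Y X (t + 1) ∩ (L t : Set V) + Q t := by
            rw [Set.mem_add]
            exact ⟨w, ⟨hwA, hwL⟩, α⁻¹ • q, Q_smul_mem hQ0 hQsmul (inv_nonneg.2 hα) hq, rfl⟩
          have hbS2 : X t ∈ ({X t} : Set V) + Q t := by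
            rw [Set.mem_add]
            exact ⟨X t, rfl, 0, hQ0 t, add_zero _⟩
          have hv : α • (w + α⁻¹ • q) + β • X t = v := by
            rw [hwdef, hqdef, ← h8, smul_add, smul_smul, smul_smul,
              mul_inv_cancel₀ hαne, one_smul, one_smul]
            abel
          rw [← hv]
          exact (convex_convexHull ℝ _)
            (subset_convexHull ℝ _ (Set.mem_union_left _ haS1))
            (subset_convexHull ℝ _ (Set.mem_union_right _ hbS2))
            hα hβ hαβ
      · -- membership in {Y t} + Q t
        have key := h7 t le_rfl (by omega)
        rw [hsumIcc, one_smul, h8] at key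
        rw [Set.mem_add]
        exact ⟨Y t, rfl, v - Y t, key, by abel⟩

end Aux

/-- 𝒵ᵃ_0 coincides with the set of initial endowments z_0 of pairs
(φ,z) ∈ Λᵃ(Y,X): mixed stopping time φ and predictable z with z_{T+1} = 0,
z_t − φ_t X_t − z_{t+1} ∈ Q_t (t < T) and z_t − φ*_t Y_t ∈ Q_t (t ≤ T). -/
theorem stmt12 {V : Type*} [AddCommGroup V] [Module ℝ V] (T : ℕ)
    (L : ℕ → Submodule ℝ V) (Q : ℕ → Set V)
    (hQconv : ∀ t, Convex ℝ (Q t))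
    (hQ0 : ∀ t, (0 : V) ∈ Q t)
    (hQadd : ∀ t, Q t + Q t = Q t)
    (hQsmul : ∀ t, ∀ c : ℝ, 0 < c → c • Q t = Q t)
    (hQL : ∀ t, Q (t + 1) ∩ (L t : Set V) ⊆ Q t)
    (Y X : ℕ → V) :
    sellerZ T (fun u => (L u : Set V)) Q Y X T
      = {v : V | ∃ (φ : ℕ → ℝ) (z : ℕ → V),
          (∀ t ≤ T, 0 ≤ φ t) ∧
          (∑ t ∈ Finset.range (T + 1), φ t = 1) ∧
          z (T + 1) = 0 ∧
          (∀ t ≤ T, z (t + 1) ∈ L t) ∧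
          (∀ t < T, z t - φ t • X t - z (t + 1) ∈ Q t) ∧
          (∀ t ≤ T, z t - (∑ s ∈ Finset.Icc t T, φ s) • Y t ∈ Q t) ∧
          z 0 = v} := by
  rw [sellerZ_eq_sellerA hQconv hQ0 hQadd hQsmul hQL T le_rfl, Nat.sub_self]
  ext v
  constructor
  · rintro ⟨φ, z, h1, h2, h3, h4, h5, h6, h7, h8⟩
    exact ⟨φ, z, h1, h3, h4, fun s hs => h5 s (Nat.zero_le s) hs,
      fun s hs => h6 s (Nat.zero_le s) hs, fun s hs => h7 s (Nat.zero_le s) hs, h8⟩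
  · rintro ⟨φ, z, h1, h3, h4, h5, h6, h7, h8⟩
    exact ⟨φ, z, h1, fun s hs => absurd hs (Nat.not_lt_zero s), h3, h4,
      fun s _ hs => h5 s hs, fun s _ hs => h6 s hs, fun s _ hs => h7 s hs, h8⟩
end

section
/- Fix a mixed stopping time φ. The map z ↦ u defined by u^ψ_t := z^ψ_t − ψ*_t ∑_{s=0}^{t−1} φ_s X_s (for every mixed stopping time ψ and t = 0,…,T+1) is a bijection between seller's superhedging strategies z for the American option with payoff Q_{φ,t} := φ*_t Y_t + ∑_{s=0}^{t−1} φ_s X_s and strategy families u such that (φ,u) superhedges the game option, i.e. u^ψ_t − G_t^{φ,ψ} − u^ψ_{t+1} ∈ K_t for all ψ, t; moreover it preserves the initial endowment (u_0 = z_0) and the non-anticipation property. -/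
/-- ψ is a mixed stopping time on {0,…,T}. -/
def MixedST (T : ℕ) (ψ : ℕ → ℝ) : Prop :=
  (∀ t ≤ T, 0 ≤ ψ t) ∧ ∑ t ∈ Finset.range (T + 1), ψ t = 1

/-- ψ*_t := ∑_{s=t}^T ψ_s (so ψ*_{T+1} = 0). -/
def star (T : ℕ) (ψ : ℕ → ℝ) (t : ℕ) : ℝ := ∑ s ∈ Finset.Icc t T, ψ s

/-- Non-anticipation: the portfolio at time t depends only on ψ_0,…,ψ_{t−1}. -/
def NonAnticipating {V : Type*} (T : ℕ) (u : (ℕ → ℝ) → ℕ → V) : Prop :=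
  ∀ ψ ψ', MixedST T ψ → MixedST T ψ' →
    ∀ t ≤ T + 1, (∀ s < t, ψ s = ψ' s) → u ψ t = u ψ' t

lemma star_T1 (T : ℕ) (ψ : ℕ → ℝ) : _root_.star T ψ (T + 1) = 0 := by
  simp [_root_.star]

lemma star_step (T : ℕ) (ψ : ℕ → ℝ) {t : ℕ} (h : t ≤ T) :
    _root_.star T ψ t = ψ t + _root_.star T ψ (t + 1) := by
  unfold _root_.star
  rw [← Finset.Ioc_insert_left h, Finset.sum_insert (by simp), ← Finset.Icc_add_one_left_eq_Ioc]

lemma star_eq (T : ℕ) {ψ : ℕ → ℝ} (hψ : MixedST T ψ) {t : ℕ} (ht : t ≤ T + 1) :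
    _root_.star T ψ t = 1 - ∑ s ∈ Finset.range t, ψ s := by
  have h := hψ.2
  rw [Finset.range_eq_Ico, ← Finset.sum_Ico_consecutive _ (Nat.zero_le t) ht] at h
  unfold _root_.star
  rw [← Finset.Ico_add_one_right_eq_Icc]
  rw [Finset.range_eq_Ico]
  linarith

lemma key_id {V : Type*} [AddCommGroup V] [Module ℝ V] (T : ℕ)
    (Y X : ℕ → V) (φ ψ : ℕ → ℝ) {t : ℕ} (ht : t ≤ T) (a b : V) :
    a - ψ t • ((_root_.star T φ t) • Y t + ∑ s ∈ Finset.range t, φ s • X s) - b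
      = (a - _root_.star T ψ t • (∑ s ∈ Finset.range t, φ s • X s))
        - ((ψ t * _root_.star T φ t) • Y t
            + (_root_.star T ψ (t + 1) * φ t) • X t)
        - (b - _root_.star T ψ (t + 1) • (∑ s ∈ Finset.range (t + 1), φ s • X s)) := by
  rw [Finset.sum_range_succ, star_step T ψ ht]
  module

/-- Fix a mixed stopping time φ. The map z ↦ u, u^ψ_t := z^ψ_t − ψ*_t ∑_{s<t} φ_s X_s,
is a bijection between seller's superhedging strategies for the American option with
payoff Q_{φ,t} = φ*_t Y_t + ∑_{s<t} φ_s X_s and families u with (φ,u) superhedging the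
game option (u^ψ_t − G_t^{φ,ψ} − u^ψ_{t+1} ∈ K_t), both taken with non-anticipation;
moreover it preserves the initial endowment. -/
theorem stmt14 {V : Type*} [AddCommGroup V] [Module ℝ V] (T : ℕ)
    (K : ℕ → Set V) (Y X : ℕ → V) (φ : ℕ → ℝ) (hφ : MixedST T φ) :
    Set.BijOn
      (fun (z : (ℕ → ℝ) → ℕ → V) => fun ψ t =>
        z ψ t - star T ψ t • (∑ s ∈ Finset.range t, φ s • X s))
      {z : (ℕ → ℝ) → ℕ → V |
        (∀ ψ, MixedST T ψ → z ψ (T + 1) = 0 ∧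
          ∀ t ≤ T,
            z ψ t - ψ t • ((star T φ t) • Y t + ∑ s ∈ Finset.range t, φ s • X s)
                - z ψ (t + 1) ∈ K t) ∧
          NonAnticipating T z}
      {u : (ℕ → ℝ) → ℕ → V |
        (∀ ψ, MixedST T ψ → u ψ (T + 1) = 0 ∧
          ∀ t ≤ T,
            u ψ t - ((ψ t * star T φ t) • Y t + (star T ψ (t + 1) * φ t) • X t)
                - u ψ (t + 1) ∈ K t) ∧
          NonAnticipating T u}
      ∧
    ∀ (z : (ℕ → ℝ) → ℕ → V) (ψ : ℕ → ℝ),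
      (fun ψ t => z ψ t - star T ψ t • (∑ s ∈ Finset.range t, φ s • X s)) ψ 0
        = z ψ 0 := by
  set S : ℕ → V := fun t => ∑ s ∈ Finset.range t, φ s • X s with hS
  set f : ((ℕ → ℝ) → ℕ → V) → (ℕ → ℝ) → ℕ → V :=
    fun z ψ t => z ψ t - _root_.star T ψ t • S t with hf
  set g : ((ℕ → ℝ) → ℕ → V) → (ℕ → ℝ) → ℕ → V :=
    fun u ψ t => u ψ t + _root_.star T ψ t • S t with hg
  have hgf : ∀ z, g (f z) = z := by
    intro z; funext ψ t; simp [hf, hg]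
  have hfg : ∀ u, f (g u) = u := by
    intro u; funext ψ t; simp [hf, hg]
  -- star values agree under agreement of ψ on s < t
  have hstar : ∀ ψ ψ', MixedST T ψ → MixedST T ψ' → ∀ t ≤ T + 1,
      (∀ s < t, ψ s = ψ' s) → _root_.star T ψ t = _root_.star T ψ' t := by
    intro ψ ψ' hψ hψ' t ht hagree
    rw [star_eq T hψ ht, star_eq T hψ' ht]
    congr 1
    exact Finset.sum_congr rfl fun s hs => hagree s (Finset.mem_range.mp hs)
  constructor
  · apply Set.InvOn.bijOn (f' := g) ⟨fun z _ => hgf z, fun u _ => hfg u⟩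
    · -- MapsTo f
      rintro z ⟨hz, hzna⟩
      constructor
      · intro ψ hψ
        obtain ⟨hterm, hcond⟩ := hz ψ hψ
        constructor
        · simp [hf, hterm, star_T1]
        · intro t ht
          have := hcond t ht
          rwa [key_id T Y X φ ψ ht (z ψ t) (z ψ (t + 1))] at this
      · intro ψ ψ' hψ hψ' t ht hagree
        simp only [hf]
        rw [hzna ψ ψ' hψ hψ' t ht hagree, hstar ψ ψ' hψ hψ' t ht hagree]
    · -- MapsTo g
      rintro u ⟨hu, huna⟩
      constructor
      · intro ψ hψ
        obtain ⟨hterm, hcond⟩ := hu ψ hψ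
        constructor
        · simp [hg, hterm, star_T1]
        · intro t ht
          have := hcond t ht
          rw [key_id T Y X φ ψ ht (g u ψ t) (g u ψ (t + 1))]
          have h1 : g u ψ t - _root_.star T ψ t • S t = u ψ t := by simp [hg]
          have h2 : g u ψ (t + 1) - _root_.star T ψ (t + 1) • S (t + 1) = u ψ (t + 1) := by
            simp [hg]
          rw [h1, h2]
          exact this
      · intro ψ ψ' hψ hψ' t ht hagree
        simp only [hg]
        rw [huna ψ ψ' hψ hψ' t ht hagree, hstar ψ ψ' hψ hψ' t ht hagree]
  · intro z ψ
    simp [_root_.star]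
end

section
/- Let u = (u_s)_{s=t}^{T+1} satisfy u_{T+1} = 0, u_s ∈ L_{s−1} for all s, u_{t+1} ∈ L_t, and u_s − u_{s+1} ∈ Q_s for s = t+1,…,T. Then u_{t+1} ∈ Q_t. (Backward induction: u_{s+1} ∈ Q_s for all s = t,…,T.) -/
/-- If u_{T+1} = 0, u_s ∈ L_{s−1}, and u_s − u_{s+1} ∈ Q_s for s = t+1,…,T, then
u_{t+1} ∈ Q_t (backward induction using Q_s + Q_s = Q_s and Q_s ∩ L_{s−1} ⊆ Q_{s−1}). -/
theorem stmt16 {V : Type*} [AddCommGroup V] [Module ℝ V] (T : ℕ)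
    (L : ℕ → Submodule ℝ V) (Q : ℕ → Set V)
    (hQadd : ∀ s, ∀ x ∈ Q s, ∀ y ∈ Q s, x + y ∈ Q s)
    (hQ0T : (0 : V) ∈ Q T)
    (hQL : ∀ s, 1 ≤ s → Q s ∩ (L (s - 1) : Set V) ⊆ Q (s - 1))
    (t : ℕ) (ht : t ≤ T) (u : ℕ → V)
    (huT : u (T + 1) = 0)
    (huL : ∀ s, t + 1 ≤ s → s ≤ T + 1 → u s ∈ (L (s - 1) : Set V))
    (hu : ∀ s, t + 1 ≤ s → s ≤ T → u s - u (s + 1) ∈ Q s) :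
    u (t + 1) ∈ Q t := by
  have key : ∀ n s, s + n = T → t ≤ s → u (s + 1) ∈ Q s := by
    intro n
    induction n with
    | zero => intro s hs _; simp only [Nat.add_zero] at hs; subst hs; rw [huT]; exact hQ0T
    | succ n ih =>
      intro s hs hts
      have hIH : u (s + 1 + 1) ∈ Q (s + 1) := ih (s + 1) (by omega) (by omega)
      have h1 : u (s + 1) - u (s + 1 + 1) ∈ Q (s + 1) := hu (s + 1) (by omega) (by omega)
      have h2 : u (s + 1) ∈ Q (s + 1) := by
        have := hQadd (s + 1) _ h1 _ hIH
        simpa using this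
      have h3 : u (s + 1) ∈ (L s : Set V) := by
        have := huL (s + 1) (by omega) (by omega)
        simpa using this
      have := hQL (s + 1) (by omega) ⟨h2, h3⟩
      simpa using this
  exact key (T - t) t (by omega) le_rfl
end
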